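/- For every natural number n, ∑_{k=0}^n 3^k · (L_k + F_{k+1}) = 3^{n+1} · F_{n+1}. -/

import Mathlib

def lucas : ℕ → ℕ
  | 0 => 2
  | 1 => 1
  | n + 2 => lucas (n + 1) + lucas n

lemma lucas_fib (n : ℕ) : lucas (n + 1) + Nat.fib (n + 2) = 2 * Nat.fib (n + 2) + Nat.fib n := by
  induction n using Nat.twoStepInduction with
  | zero => simp [lucas]
  | one => decide
  | more n ih1 ih2 =>
    simp only [lucas, Nat.fib_add_two] at *
    omega

theorem sury_three (n : ℕ) :
    ∑ k ∈ Finset.range (n + 1), 3 ^ k * (lucas k + Nat.fib (k + 1)) =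
      3 ^ (n + 1) * Nat.fib (n + 1) := by
  induction n with
  | zero => simp [lucas]
  | succ n ih =>
    rw [Finset.sum_range_succ, ih, lucas_fib, Nat.fib_add_two]
    ring
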